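/- arXiv:1110.2277 — 4 statements merged into one kernel-verified Lean document; each statement's English description precedes it below -/
import Mathlib

section
/- Let R be a commutative ring and M an artinian R-module. Then the set F of maximal ideals m of R for which there exists an injective R-homomorphism R/m → M is finite; moreover, writing J for the intersection of the members of F (with J = R if F is empty), every element x ∈ M is annihilated by some power of J, i.e., for each x ∈ M there exists n ∈ ℕ with J^n · x = 0. -/
universe u v


/-- In a nontrivial commutative artinian ring, every maximal ideal is the
annihilator of some nonzero element. -/
theorem exists_ann_eq_maximal_of_artinian {A : Type*} [CommRing A] [IsArtinianRing A]
    [Nontrivial A] (m : Ideal A) (hm : m.IsMaximal) :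
    ∃ a : A, a ≠ 0 ∧ ∀ r : A, r * a = 0 ↔ r ∈ m := by
  obtain ⟨n₀, hn₀⟩ := IsArtinianRing.isNilpotent_jacobson_bot (R := A)
  set n := n₀ + 1 with hn_def
  have hnil : Ideal.jacobson (⊥ : Ideal A) ^ n = 0 := by
    rw [hn_def, pow_succ, hn₀, zero_mul]
  have hfin := IsArtinianRing.setOfPred_isMaximal_finite A
  classical
  set t : Finset (Ideal A) := hfin.toFinset.erase m with ht_def
  set B : Ideal A := ∏ p ∈ t, p ^ n with hB_def
  -- m^n * B = 0
  have hprod_le : (∏ p ∈ hfin.toFinset, p) ≤ Ideal.jacobson (⊥ : Ideal A) := by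
    apply le_sInf
    rintro J ⟨-, hJ⟩
    exact le_trans Ideal.prod_le_inf
      (Finset.inf_le (by simpa using hfin.mem_toFinset.mpr hJ))
  have hm_mem : m ∈ hfin.toFinset := hfin.mem_toFinset.mpr hm
  have hins : insert m t = hfin.toFinset := Finset.insert_erase hm_mem
  have hmB : m ^ n * B = 0 := by
    have h1 : m ^ n * B = ∏ p ∈ insert m t, p ^ n := by
      rw [Finset.prod_insert (Finset.notMem_erase m _)]
    have h2 : (∏ p ∈ insert m t, p ^ n) = (∏ p ∈ insert m t, p) ^ n :=
      Finset.prod_pow _ _ _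
    have h3 : (∏ p ∈ insert m t, p) ^ n ≤ Ideal.jacobson (⊥ : Ideal A) ^ n := by
      apply Ideal.pow_right_mono
      rw [hins]; exact hprod_le
    have := h3.trans (le_of_eq hnil)
    rw [h1, h2]
    exact le_bot_iff.mp this
  have hBne : B ≠ 0 := by
    intro hB0
    have : B ≤ m := hB0 ▸ bot_le
    rw [hB_def] at this
    obtain ⟨p, hp, hple⟩ := (hm.isPrime.prod_le).mp this
    have : p ≤ m := (Ideal.IsPrime.pow_le_iff (by omega)).mp hple
    have hpmax : p.IsMaximal := hfin.mem_toFinset.mp (Finset.mem_of_mem_erase hp)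
    exact (Finset.ne_of_mem_erase hp) (hpmax.eq_of_le hm.ne_top this)
  -- minimal k with m^k * B = 0
  have hP : ∃ k, m ^ k * B = 0 := ⟨n, hmB⟩
  set k := Nat.find hP with hk_def
  have hk : m ^ k * B = 0 := Nat.find_spec hP
  have hkpos : k ≠ 0 := by
    intro h0
    rw [h0, pow_zero, one_mul] at hk
    exact hBne hk
  have hCne : m ^ (k - 1) * B ≠ 0 := Nat.find_min hP (by omega)
  obtain ⟨a, haC, ha0⟩ := Submodule.exists_mem_ne_zero_of_ne_bot hCne
  have hmeq : m * (m ^ (k - 1) * B) = m ^ k * B := by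
    rw [← mul_assoc, ← pow_succ']
    congr 2
    omega
  have hkill : ∀ i ∈ m, i * a = 0 := by
    intro i hi
    have : i * a ∈ m * (m ^ (k - 1) * B) := Ideal.mul_mem_mul hi haC
    rw [hmeq, hk] at this
    simpa using this
  refine ⟨a, ha0, fun r => ⟨fun hra => ?_, fun hr => hkill r hr⟩⟩
  by_contra hrm
  obtain ⟨y, i, hi, hyi⟩ := hm.exists_inv hrm
  have ha' : a = i * a := by
    calc a = (y * r + i) * a := by rw [hyi, one_mul]
    _ = y * (r * a) + i * a := by ring
    _ = i * a := by rw [hra, mul_zero, zero_add]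
  rw [hkill i hi] at ha'
  exact ha0 ha'


theorem exists_embedding_of_maximal_ge_ann {R : Type*} [CommRing R] {M : Type*}
    [AddCommGroup M] [Module R M] [IsArtinian R M] (x : M) (m : Ideal R) (hm : m.IsMaximal)
    (hle : LinearMap.ker (LinearMap.toSpanSingleton R M x) ≤ m) :
    ∃ f : (R ⧸ m) →ₗ[R] M, Function.Injective f := by
  set I : Ideal R := LinearMap.ker (LinearMap.toSpanSingleton R M x) with hI_def
  have hInetop : I ≠ ⊤ := fun h => hm.ne_top (top_le_iff.mp (h ▸ hle))
  haveI : IsArtinian R (R ⧸ I) :=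
    isArtinian_of_linearEquiv (LinearMap.quotKerEquivRange
      (LinearMap.toSpanSingleton R M x)).symm
  haveI : IsArtinianRing (R ⧸ I) := isArtinian_of_tower R ‹IsArtinian R (R ⧸ I)›
  haveI : Nontrivial (R ⧸ I) := Ideal.Quotient.nontrivial_iff.mpr hInetop
  have hsurj : Function.Surjective (Ideal.Quotient.mk I) := Ideal.Quotient.mk_surjective
  have hker : RingHom.ker (Ideal.Quotient.mk I) = I := Ideal.mk_ker
  have hmbar : (m.map (Ideal.Quotient.mk I)).IsMaximal := by
    rcases Ideal.map_eq_top_or_isMaximal_of_surjective _ hsurj hm with h | h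
    · exfalso
      have := congrArg (Ideal.comap (Ideal.Quotient.mk I)) h
      rw [Ideal.comap_map_of_surjective _ hsurj, Ideal.comap_top,
        ← RingHom.ker_eq_comap_bot, hker, sup_eq_left.mpr hle] at this
      exact hm.ne_top this
    · exact h
  obtain ⟨abar, habar0, hann⟩ := exists_ann_eq_maximal_of_artinian _ hmbar
  obtain ⟨a, rfl⟩ := hsurj abar
  set y : M := a • x with hy_def
  have hcomap : Ideal.comap (Ideal.Quotient.mk I) (m.map (Ideal.Quotient.mk I)) = m := by
    rw [Ideal.comap_map_of_surjective _ hsurj, ← RingHom.ker_eq_comap_bot, hker,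
      sup_eq_left.mpr hle]
  have hanny : ∀ r : R, r • y = 0 ↔ r ∈ m := by
    intro r
    have h1 : r • y = (r * a) • x := by rw [hy_def, smul_smul]
    have h2 : (r * a) • x = 0 ↔ (r * a : R) ∈ I := by
      constructor
      · intro h; exact h
      · intro h; exact h
    rw [h1, h2, ← Ideal.Quotient.eq_zero_iff_mem, _root_.map_mul, hann]
    exact ⟨fun h => hcomap ▸ Ideal.mem_comap.mpr h, fun h => Ideal.mem_map_of_mem _ h⟩
  have hkery : LinearMap.ker (LinearMap.toSpanSingleton R M y) = m := by
    ext r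
    exact hanny r
  refine ⟨Submodule.liftQ m (LinearMap.toSpanSingleton R M y) (le_of_eq hkery.symm), ?_⟩
  rw [← LinearMap.ker_eq_bot]
  exact Submodule.ker_liftQ_eq_bot _ _ _ (le_of_eq hkery)

/-- For an artinian module `M` over a commutative ring `R`, the set of maximal ideals `m`
with an embedding `R/m ↪ M` is finite, and every element of `M` is annihilated by some
power of the intersection `J` of these maximal ideals. -/
theorem artinian_module_finite_socle_maximals_and_power_annihilates
    {R : Type u} [CommRing R] (M : Type v) [AddCommGroup M] [Module R M]
    [IsArtinian R M] :
    {m : Ideal R | m.IsMaximal ∧ ∃ f : (R ⧸ m) →ₗ[R] M, Function.Injective f}.Finite ∧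
    ∀ x : M, ∃ n : ℕ,
      ∀ a ∈ (sInf {m : Ideal R | m.IsMaximal ∧
          ∃ f : (R ⧸ m) →ₗ[R] M, Function.Injective f}) ^ n, a • x = 0 := by
  classical
  set F : Set (Ideal R) :=
    {m : Ideal R | m.IsMaximal ∧ ∃ f : (R ⧸ m) →ₗ[R] M, Function.Injective f} with hF
  constructor
  · -- Finiteness
    by_contra hinf
    have hinf' : F.Infinite := hinf
    set e := hinf'.natEmbedding with he
    set m : ℕ → Ideal R := fun i => (e i : Ideal R) with hm
    have hmax : ∀ i, (m i).IsMaximal := fun i => (e i).2.1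
    have hdist : ∀ i j, i ≠ j → m i ≠ m j := fun i j hij h =>
      hij (e.injective (Subtype.ext h))
    choose f hf using fun i => (e i).2.2
    set x : ℕ → M := fun i => f i 1 with hx
    have hsm : ∀ (i : ℕ) (r : R), r • (1 : R ⧸ m i) = Ideal.Quotient.mk (m i) r := by
      intro i r
      have : (1 : R ⧸ m i) = Submodule.Quotient.mk (1 : R) := rfl
      rw [this, ← Submodule.Quotient.mk_smul, smul_eq_mul, mul_one]
      rfl
    have hann : ∀ (i : ℕ) (r : R), r • x i = 0 ↔ r ∈ m i := by
      intro i r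
      have h1 : r • x i = f i (Ideal.Quotient.mk (m i) r) := by
        rw [hx, ← map_smul, hsm]
      rw [h1, show (0 : M) = f i 0 from (map_zero _).symm, (hf i).eq_iff,
        Ideal.Quotient.eq_zero_iff_mem]
    have hxne : ∀ i, x i ≠ 0 := by
      intro i h
      haveI : Nontrivial (R ⧸ m i) := Ideal.Quotient.nontrivial_iff.mpr (hmax i).ne_top
      have h1 : (1 : R) • x i = 0 := by rw [one_smul]; exact h
      exact (hmax i).ne_top (Ideal.eq_top_iff_one _ |>.mpr ((hann i 1).mp h1))
    set S : ℕ → Submodule R M := fun i => Submodule.span R {x i} with hS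
    set N : ℕ → Submodule R M := fun k => ⨆ i, ⨆ (_ : k ≤ i), S i with hN
    have hmono : ∀ {k l : ℕ}, k ≤ l → N l ≤ N k := by
      intro k l h
      refine iSup₂_le fun i hi => ?_
      exact le_iSup₂ (f := fun i (_ : k ≤ i) => S i) i (h.trans hi)
    have hnotmem : ∀ k, x k ∉ N (k + 1) := by
      intro k hk
      obtain ⟨s, hs⟩ := Submodule.mem_iSup_iff_exists_finset.mp hk
      set t : Finset ℕ := s.erase k with ht
      have hcop : m k ⊔ ∏ i ∈ t, m i = ⊤ :=
        Ideal.sup_prod_eq_top fun i hi =>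
          (hmax k).coprime_of_ne (hmax i) (hdist k i (Ne.symm (Finset.ne_of_mem_erase hi)))
      rw [Ideal.eq_top_iff_one] at hcop
      obtain ⟨c, hc, b, hb, hcb⟩ := Submodule.mem_sup.mp hcop
      have hbk : ∀ i ∈ t, b ∈ m i := fun i hi =>
        (Ideal.prod_le_inf.trans (Finset.inf_le hi)) hb
      have hle : (⨆ i ∈ s, ⨆ (_ : k + 1 ≤ i), S i) ≤ Submodule.torsionBy R M b := by
        refine iSup₂_le fun i hi => iSup_le fun hki => ?_
        rw [hS, Submodule.span_le, Set.singleton_subset_iff]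
        exact (Submodule.mem_torsionBy_iff _ _).mpr
          ((hann i b).mpr (hbk i (Finset.mem_erase.mpr ⟨by omega, hi⟩)))
      have hbx : b • x k = 0 := (Submodule.mem_torsionBy_iff _ _).mp (hle hs)
      have hck : c • x k = 0 := (hann k c).mpr hc
      have : x k = 0 := by
        calc x k = (c + b) • x k := by rw [hcb, one_smul]
        _ = c • x k + b • x k := add_smul c b (x k)
        _ = 0 := by rw [hck, hbx, add_zero]
      exact hxne k this
    obtain ⟨n, hn⟩ := IsArtinian.monotone_stabilizes
      (⟨fun k => OrderDual.toDual (N k), fun a b h => hmono h⟩ : ℕ →o (Submodule R M)ᵒᵈ)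
    have heq : N n = N (n + 1) := hn (n + 1) (Nat.le_succ n)
    have hxn : x n ∈ N n :=
      (le_iSup₂ (f := fun i (_ : n ≤ i) => S i) n (le_refl n))
        (Submodule.mem_span_singleton_self (x n))
    exact hnotmem n (heq ▸ hxn)
  · -- Every element killed by a power of J
    intro x
    by_cases hx0 : x = 0
    · exact ⟨0, fun a _ => by rw [hx0, smul_zero]⟩
    set I : Ideal R := LinearMap.ker (LinearMap.toSpanSingleton R M x) with hI
    have hInetop : I ≠ ⊤ := by
      intro h
      apply hx0
      have h1 : (1 : R) ∈ I := h ▸ Submodule.mem_top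
      have h2 : (1 : R) • x = 0 := h1
      simpa using h2
    haveI : IsArtinian R (R ⧸ I) :=
      isArtinian_of_linearEquiv (LinearMap.quotKerEquivRange
        (LinearMap.toSpanSingleton R M x)).symm
    haveI : IsArtinianRing (R ⧸ I) := isArtinian_of_tower R ‹IsArtinian R (R ⧸ I)›
    obtain ⟨n, hn⟩ := IsArtinianRing.isNilpotent_jacobson_bot (R := R ⧸ I)
    refine ⟨n, fun a ha => ?_⟩
    have hJK : sInf F ≤ I.jacobson := by
      rw [Ideal.jacobson]
      apply le_sInf
      rintro mm ⟨hImm, hmm⟩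
      exact sInf_le (⟨hmm, exists_embedding_of_maximal_ge_ann x mm hmm hImm⟩ : mm ∈ F)
    have hKn : I.jacobson ^ n ≤ I := by
      intro b hb
      have h1 : Ideal.map (Ideal.Quotient.mk I) (I.jacobson ^ n) = 0 := by
        rw [Ideal.map_pow, Ideal.map_jacobson_of_surjective Ideal.Quotient.mk_surjective
          (le_of_eq Ideal.mk_ker), Ideal.map_quotient_self, hn]
      have h2 : Ideal.Quotient.mk I b ∈ (0 : Ideal (R ⧸ I)) :=
        h1 ▸ Ideal.mem_map_of_mem _ hb
      have h3 : Ideal.Quotient.mk I b = 0 := by simpa using h2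
      exact Ideal.Quotient.eq_zero_iff_mem.mp h3
    have : a ∈ I := hKn (Ideal.pow_right_mono hJK n ha)
    exact this
end

section
/- Let (R_i)_{i ∈ ι} be a family of commutative topological rings and let A = ∏_{i ∈ ι} R_i be their product, equipped with the product ring structure and the product topology. Then every prime ideal P of A (so in particular P ≠ A) that is closed as a subset of A has the following form: there exist an index j ∈ ι and a prime ideal p of R_j such that P = {a ∈ A : a_j ∈ p}, i.e., P is the preimage of p under the j-th projection ring homomorphism A → R_j. -/
universe u v

/-- Every closed prime ideal of a product of commutative topological rings is the
preimage of a prime ideal of one of the factors under the corresponding projection. -/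
theorem closed_prime_ideal_of_product_is_pullback
    {ι : Type u} (R : ι → Type v) [∀ i, CommRing (R i)]
    [∀ i, TopologicalSpace (R i)] [∀ i, IsTopologicalRing (R i)]
    (P : Ideal (∀ i, R i)) [P.IsPrime] (hP : IsClosed (P : Set (∀ i, R i))) :
    ∃ (j : ι) (p : Ideal (R j)), p.IsPrime ∧ P = p.comap (Pi.evalRingHom R j) := by
  classical
  -- Key lemma: if all "truncations" c * e_i lie in P, then c ∈ P, by closedness.
  have key : ∀ c : ∀ i, R i, (∀ i, c * Pi.single i 1 ∈ P) → c ∈ P := by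
    intro c hc
    have hcl : c ∈ closure (P : Set (∀ i, R i)) := by
      rw [mem_closure_iff_nhds]
      intro U hU
      rw [nhds_pi, Filter.mem_pi] at hU
      obtain ⟨I, hI, t, ht, hsub⟩ := hU
      refine ⟨∑ i ∈ hI.toFinset, c * Pi.single i 1, hsub ?_,
        Ideal.sum_mem _ (fun i _ => hc i)⟩
      intro i hi
      have : ((∑ j ∈ hI.toFinset, c * Pi.single j 1 : ∀ i, R i)) i = c i := by
        rw [Finset.sum_apply]
        have hiI : i ∈ hI.toFinset := hI.mem_toFinset.mpr hi
        rw [Finset.sum_eq_single i]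
        · simp [Pi.single_apply]
        · intro b _ hb
          simp [Pi.single_apply, hb]
        · intro h; exact absurd hiI h
      rw [this]
      exact mem_of_mem_nhds (ht i)
    rwa [hP.closure_eq] at hcl
  -- There is an index j with e_j ∉ P.
  have hne : ¬ ∀ i, (Pi.single i 1 : ∀ i, R i) ∈ P := by
    intro h
    have : (1 : ∀ i, R i) ∈ P := key 1 (fun i => by simpa using h i)
    exact (Ideal.IsPrime.ne_top ‹P.IsPrime›) ((Ideal.eq_top_iff_one _).mpr this)
  obtain ⟨j, hj⟩ := not_forall.mp hne
  -- For i ≠ j, e_i ∈ P.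
  have hmem : ∀ i, i ≠ j → (Pi.single i 1 : ∀ i, R i) ∈ P := by
    intro i hij
    have hzero : (Pi.single i 1 : ∀ i, R i) * Pi.single j 1 = 0 := by
      funext k
      by_cases hk : k = i <;> simp [Pi.single_apply, hk, hij]
    have := ‹P.IsPrime›.mem_or_mem (by rw [hzero]; exact P.zero_mem)
    exact this.resolve_right hj
  -- The kernel of evaluation at j is contained in P.
  have hker : RingHom.ker (Pi.evalRingHom R j) ≤ P := by
    intro c hc
    have hcj : c j = 0 := hc
    refine key c (fun i => ?_)
    by_cases hij : i = j
    · subst hij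
      have : c * Pi.single i 1 = 0 := by
        funext k
        by_cases hk : k = i
        · subst hk; simp [hcj]
        · simp [Pi.single_apply, hk]
      rw [this]; exact P.zero_mem
    · exact Ideal.mul_mem_left _ _ (hmem i hij)
  have hsurj : Function.Surjective (Pi.evalRingHom R j) := fun x =>
    ⟨Pi.single j x, by simp⟩
  refine ⟨j, P.map (Pi.evalRingHom R j),
    Ideal.map_isPrime_of_surjective hsurj hker, ?_⟩
  rw [Ideal.comap_map_of_surjective _ hsurj]
  exact (sup_eq_left.mpr (fun x hx => hker hx)).symm
end

section
/- Let R be a commutative topological ring and M an artinian R-module such that every element of M is annihilated by some open ideal of R, i.e., for each x ∈ M there exists an ideal I of R that is an open subset of R and satisfies a·x = 0 for all a ∈ I. Then the radical √(Ann_R(M)) of the annihilator Ann_R(M) = {a ∈ R : a·x = 0 for all x ∈ M} is a closed subset of R. -/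
universe u v

/-- Auxiliary Nakayama-type lemma: if `M` is an artinian module and `J` is the radical of
its annihilator, then some power of `J` kills `M`. -/
theorem aux_radical_annihilator_pow_smul_eq_bot
    {R : Type u} [CommRing R] (M : Type v) [AddCommGroup M] [Module R M] [IsArtinian R M] :
    ∃ k : ℕ, ((Module.annihilator R M : Ideal R).radical ^ k • (⊤ : Submodule R M)) = ⊥ := by
  set A : Ideal R := Module.annihilator R M with hA
  set J : Ideal R := A.radical with hJdef
  obtain ⟨k, hk⟩ := IsArtinian.monotone_stabilizes (R := R) (M := M)
    ⟨fun n => OrderDual.toDual (J ^ n • (⊤ : Submodule R M)), fun n m hnm =>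
      Submodule.smul_mono_left (Ideal.pow_le_pow_right hnm)⟩
  refine ⟨k, ?_⟩
  set W : Submodule R M := J ^ k • ⊤ with hW
  have hstab : (J ^ k • (⊤ : Submodule R M)) = J ^ (k + 1) • ⊤ := hk (k + 1) (Nat.le_succ k)
  have hJW : J • W = W := by
    have h1 : J • W = J ^ (k + 1) • (⊤ : Submodule R M) := by
      rw [hW, ← Submodule.smul_assoc, Ideal.smul_eq_mul, mul_comm, ← pow_succ]
    rw [h1, ← hstab]
  by_contra hne
  have hWne : W ≠ ⊥ := hne
  obtain ⟨N, ⟨hN0, hNJ⟩, hmin⟩ := IsArtinian.set_has_minimal (R := R) (M := M)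
    {N : Submodule R M | N ≠ ⊥ ∧ J • N = N} ⟨W, hWne, hJW⟩
  -- find b ∈ J and v ∈ N with b • v ≠ 0
  have hbv : ∃ b ∈ J, ∃ v ∈ N, b • v ≠ 0 := by
    by_contra hcon
    push_neg at hcon
    apply hN0
    have hle : J • N ≤ ⊥ := Submodule.smul_le.mpr fun r hr n hn =>
      (Submodule.mem_bot R).mpr (hcon r hr n hn)
    rw [← hNJ]
    exact le_bot_iff.mp hle
  obtain ⟨b, hb, v, hv, hbv0⟩ := hbv
  have hspan : Ideal.span {b} ≤ J := Ideal.span_le.mpr (Set.singleton_subset_iff.mpr hb)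
  have hle : Ideal.span {b} • N ≤ N := le_trans (Submodule.smul_mono_left hspan) hNJ.le
  have hne' : Ideal.span {b} • N ≠ ⊥ := by
    intro hbot
    apply hbv0
    have : b • v ∈ Ideal.span {b} • N :=
      Submodule.smul_mem_smul (Ideal.mem_span_singleton_self b) hv
    rw [hbot] at this
    exact (Submodule.mem_bot R).mp this
  have hJ' : J • (Ideal.span {b} • N) = Ideal.span {b} • N := by
    rw [← Submodule.smul_assoc, Ideal.smul_eq_mul, mul_comm, ← Ideal.smul_eq_mul,
      Submodule.smul_assoc, hNJ]
  have hEq : Ideal.span {b} • N = N := by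
    rcases lt_or_eq_of_le hle with hlt | heq
    · exact absurd hlt (hmin _ ⟨hne', hJ'⟩)
    · exact heq
  have hpow : ∀ n : ℕ, Ideal.span {b} ^ n • N = N := by
    intro n
    induction n with
    | zero => rw [pow_zero, Ideal.one_eq_top, Submodule.top_smul]
    | succ n ih =>
      rw [pow_succ, ← Ideal.smul_eq_mul, Submodule.smul_assoc, hEq, ih]
  obtain ⟨m, hbm⟩ : ∃ m : ℕ, b ^ m ∈ A := hb
  have hkill : Ideal.span {b} ^ m • N ≤ ⊥ := by
    rw [Ideal.span_singleton_pow]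
    refine Submodule.smul_le.mpr fun r hr n hn => ?_
    obtain ⟨c, hc⟩ := Ideal.mem_span_singleton'.mp hr
    rw [(Submodule.mem_bot R), ← hc, mul_comm, mul_smul]
    rw [Module.mem_annihilator] at hbm
    rw [hbm]
  apply hN0
  rw [← hpow m]
  exact le_bot_iff.mp hkill

/-- If every element of an artinian `R`-module `M` is annihilated by some open ideal of
the commutative topological ring `R`, then the radical of the annihilator of `M` is
closed in `R`. -/
theorem isClosed_radical_annihilator_of_open_ideal_torsion
    {R : Type u} [CommRing R] [TopologicalSpace R] [IsTopologicalRing R]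
    (M : Type v) [AddCommGroup M] [Module R M] [IsArtinian R M]
    (h : ∀ x : M, ∃ I : Ideal R, IsOpen (I : Set R) ∧ ∀ a ∈ I, a • x = 0) :
    IsClosed (((Module.annihilator R M : Ideal R).radical : Ideal R) : Set R) := by
  set A : Ideal R := Module.annihilator R M with hA
  set J : Ideal R := A.radical with hJdef
  obtain ⟨k, hk⟩ := aux_radical_annihilator_pow_smul_eq_bot (R := R) M
  apply isClosed_of_closure_subset
  intro c hc
  -- key: c • x ∈ J • ⊤ for every x
  have hc1 : ∀ x : M, c • x ∈ J • (⊤ : Submodule R M) := by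
    intro x
    obtain ⟨I, hIo, hIk⟩ := h x
    have hU : IsOpen ((fun r : R => r - c) ⁻¹' (I : Set R)) :=
      hIo.preimage (continuous_sub_right c)
    have hcU : c ∈ (fun r : R => r - c) ⁻¹' (I : Set R) := by
      simp only [Set.mem_preimage, sub_self]
      exact I.zero_mem
    obtain ⟨r, hrU, hrJ⟩ := mem_closure_iff.mp hc _ hU hcU
    have hrc : (r - c) • x = 0 := hIk _ hrU
    have hcr : c • x = r • x := by
      rw [sub_smul, sub_eq_zero] at hrc
      exact hrc.symm
    rw [hcr]
    exact Submodule.smul_mem_smul hrJ Submodule.mem_top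
  have hc2 : ∀ n : ℕ, ∀ x : M, c ^ n • x ∈ J ^ n • (⊤ : Submodule R M) := by
    intro n
    induction n with
    | zero =>
      intro x
      simp
    | succ n ih =>
      intro x
      have hx : c ^ n • x ∈ J ^ n • (⊤ : Submodule R M) := ih x
      have hstep : c • (c ^ n • x) ∈ J ^ n • (J • (⊤ : Submodule R M)) := by
        refine Submodule.smul_induction_on hx ?_ ?_
        · intro r hr m _
          have : c • r • m = r • c • m := by
            rw [smul_smul, smul_smul, mul_comm]
          rw [this]
          exact Submodule.smul_mem_smul hr (hc1 m)
        · intro y z hy hz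
          rw [smul_add]
          exact Submodule.add_mem _ hy hz
      have hrw : J ^ n • (J • (⊤ : Submodule R M)) = J ^ (n + 1) • ⊤ := by
        rw [← Submodule.smul_assoc, Ideal.smul_eq_mul, ← pow_succ]
      have hpc : c ^ (n + 1) • x = c • (c ^ n • x) := by
        rw [pow_succ, mul_comm, mul_smul]
      rw [hpc, ← hrw]
      exact hstep
  have hck : c ^ k ∈ A := by
    rw [Module.mem_annihilator]
    intro x
    have := hc2 k x
    rw [hk] at this
    exact (Submodule.mem_bot R).mp this
  exact ⟨k, hck⟩
end

section
/- Let R be a commutative noetherian ring and M an artinian R-module, and let m_1, …, m_s be the (finitely many, all maximal) associated primes of M. For an ideal I of R let Γ_I(M) denote the submodule {x ∈ M : I^n · x = 0 for some n ∈ ℕ} of M. Then M is the internal direct sum of the submodules Γ_{m_1}(M), …, Γ_{m_s}(M); that is, these submodules are independent and their sum is all of M. -/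
universe u v

/-- `Γ_I(M)`: the submodule of elements of `M` annihilated by some power of `I`. -/
def powerTorsion {R : Type u} [CommRing R] (M : Type v) [AddCommGroup M] [Module R M]
    (I : Ideal R) : Submodule R M where
  carrier := {x | ∃ n : ℕ, ∀ a ∈ I ^ n, a • x = 0}
  zero_mem' := ⟨0, fun a _ => smul_zero a⟩
  add_mem' := by
    rintro x y ⟨n, hn⟩ ⟨m, hm⟩
    refine ⟨max n m, fun a ha => ?_⟩
    rw [smul_add, hn a (Ideal.pow_le_pow_right (le_max_left n m) ha),
      hm a (Ideal.pow_le_pow_right (le_max_right n m) ha), add_zero]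
  smul_mem' := by
    rintro c x ⟨n, hn⟩
    exact ⟨n, fun a ha => by rw [smul_comm a c x, hn a ha, smul_zero]⟩

section Aux

variable {R : Type u} [CommRing R] {M : Type v} [AddCommGroup M] [Module R M]

lemma aux_mem_powerTorsion {I : Ideal R} {x : M} (n : ℕ) (h : ∀ a ∈ I ^ n, a • x = 0) :
    x ∈ powerTorsion M I := ⟨n, h⟩

lemma aux_pow_mono {I J : Ideal R} (h : I ≤ J) (n : ℕ) : I ^ n ≤ J ^ n := by
  induction n with
  | zero => simp
  | succ k ih => rw [pow_succ, pow_succ]; exact Ideal.mul_mono ih h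

lemma aux_prod_mono {ι : Type*} (T : Finset ι) (f g : ι → Ideal R) (h : ∀ i ∈ T, f i ≤ g i) :
    (∏ i ∈ T, f i) ≤ ∏ i ∈ T, g i := by
  classical
  induction T using Finset.induction_on with
  | empty => simp
  | insert _ _ ha ih =>
    rw [Finset.prod_insert ha, Finset.prod_insert ha]
    exact Ideal.mul_mono (h _ (Finset.mem_insert_self _ _))
      (ih fun i hi => h i (Finset.mem_insert_of_mem hi))

lemma aux_prod_comap_le {ι : Type*} {A : Type*} [CommRing A] (T : Finset ι) (f : ι → Ideal A)
    (π : R →+* A) : (∏ i ∈ T, (f i).comap π) ≤ (∏ i ∈ T, f i).comap π := by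
  classical
  induction T using Finset.induction_on with
  | empty => simp
  | insert _ _ ha ih =>
    rw [Finset.prod_insert ha, Finset.prod_insert ha]
    exact (Ideal.mul_mono le_rfl ih).trans (Ideal.le_comap_mul π)

lemma aux_iInf_eq_prod {ι : Type*} (T : Finset ι) (p : ι → Ideal R)
    (h : (T : Set ι).Pairwise fun i j => IsCoprime (p i) (p j)) :
    (⨅ i ∈ T, p i) = ∏ i ∈ T, p i := by
  classical
  induction T using Finset.induction_on with
  | empty => simp
  | @insert a s ha ih =>
    rw [Finset.prod_insert ha, Finset.iInf_insert,
      ih (h.mono (by exact_mod_cast Finset.subset_insert a s))]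
    exact Ideal.inf_eq_mul_of_isCoprime <| IsCoprime.prod_right fun j hj =>
      h (Finset.mem_insert_self a s) (Finset.mem_insert_of_mem hj)
        (fun e => ha (e ▸ hj))

lemma aux_isField_of_bot_isMaximal {A : Type*} [CommRing A]
    (h : (⊥ : Ideal A).IsMaximal) : IsField A := by
  refine ⟨⟨0, 1, fun e => h.ne_top ((Ideal.eq_top_iff_one ⊥).mpr (e ▸ Ideal.zero_mem ⊥))⟩,
    mul_comm, fun {a} ha => ?_⟩
  have hlt : (⊥ : Ideal A) < Ideal.span {a} :=
    lt_of_le_of_ne bot_le (Ne.symm (by simpa [Ideal.span_singleton_eq_bot] using ha))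
  have htop : Ideal.span {a} = ⊤ := h.out.2 _ hlt
  obtain ⟨b, hb⟩ := Ideal.mem_span_singleton'.mp ((Ideal.eq_top_iff_one _).mp htop)
  exact ⟨b, by rwa [mul_comm]⟩

/-- Every associated prime of an artinian module is maximal. -/
lemma aux_isMaximal_of_isAssociatedPrime [IsNoetherianRing R] [IsArtinian R M] {p : Ideal R}
    (h : IsAssociatedPrime p M) : p.IsMaximal := by
  obtain ⟨hp, x, hxp⟩ := isAssociatedPrime_iff.mp h
  have e : p = Ideal.torsionOf R M x := by
    rw [hxp]; ext a
    rw [Submodule.mem_colon_singleton, Submodule.mem_bot, Ideal.mem_torsionOf_iff]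
  subst e
  have hart : IsArtinian R (R ⧸ Ideal.torsionOf R M x) :=
    isArtinian_of_linearEquiv (Ideal.quotTorsionOfEquivSpanSingleton R M x).symm
  haveI : IsArtinianRing (R ⧸ Ideal.torsionOf R M x) := isArtinian_of_tower R hart
  haveI : (⊥ : Ideal (R ⧸ Ideal.torsionOf R M x)).IsPrime := Ideal.bot_prime
  haveI : (⊥ : Ideal (R ⧸ Ideal.torsionOf R M x)).IsMaximal :=
    IsArtinianRing.isMaximal_of_isPrime _
  exact Ideal.Quotient.maximal_of_isField _ (aux_isField_of_bot_isMaximal this)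

lemma aux_mem_iSup_powerTorsion [IsNoetherianRing R] [IsArtinian R M] (x : M) :
    x ∈ ⨆ p : associatedPrimes R M, powerTorsion M p.1 := by
  classical
  by_cases hx0 : x = 0
  · simp [hx0]
  set q := Ideal.torsionOf R M x with hq
  have hart : IsArtinian R (R ⧸ q) :=
    isArtinian_of_linearEquiv (Ideal.quotTorsionOfEquivSpanSingleton R M x).symm
  haveI : IsArtinianRing (R ⧸ q) := isArtinian_of_tower R hart
  obtain ⟨n, hn⟩ := IsArtinianRing.isNilpotent_jacobson_bot (R := R ⧸ q)
  have hfin := IsArtinianRing.setOfPred_isMaximal_finite (R ⧸ q)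
  set T : Finset (Ideal (R ⧸ q)) := hfin.toFinset with hT
  set π := Ideal.Quotient.mk q with hπ
  set p : Ideal (R ⧸ q) → Ideal R := fun J => (J.comap π) ^ n with hpdef
  have hmemT : ∀ {J : Ideal (R ⧸ q)}, J ∈ T ↔ J.IsMaximal := by
    intro J; rw [hT, Set.Finite.mem_toFinset]; exact Iff.rfl
  have hmax : ∀ J ∈ T, (J.comap π).IsMaximal := fun J hJ =>
    haveI : J.IsMaximal := hmemT.mp hJ
    Ideal.comap_isMaximal_of_surjective π Ideal.Quotient.mk_surjective
  have hpair : (T : Set (Ideal (R ⧸ q))).Pairwise fun J K => IsCoprime (p J) (p K) := by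
    intro J hJ K hK hne
    have hcop : IsCoprime (J.comap π) (K.comap π) :=
      Ideal.isCoprime_iff_sup_eq.mpr <| (hmax J hJ).coprime_of_ne (hmax K hK)
        fun e => hne <| Ideal.comap_injective_of_surjective π Ideal.Quotient.mk_surjective e
    exact hcop.pow
  -- the infimum of the `p J` kills `x`
  have hker : (⨅ J ∈ T, p J) ≤ q := by
    rw [aux_iInf_eq_prod T p hpair]
    have h1 : (∏ J ∈ T, p J) ≤ (∏ J ∈ T, J ^ n).comap π :=
      le_trans (aux_prod_mono T _ _ fun J _ => Ideal.le_comap_pow π n)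
        (aux_prod_comap_le T _ π)
    have h2 : (∏ J ∈ T, J ^ n) ≤ ⊥ := by
      rw [Finset.prod_pow]
      calc (∏ J ∈ T, J) ^ n ≤ (Ideal.jacobson ⊥) ^ n := by
            refine aux_pow_mono (le_sInf ?_) n
            rintro K ⟨-, hK⟩
            exact le_trans Ideal.prod_le_inf (Finset.inf_le (hmemT.mpr hK))
        _ = ⊥ := hn
    refine h1.trans (le_trans (Ideal.comap_mono h2) ?_)
    rw [← RingHom.ker_eq_comap_bot, hπ, Ideal.mk_ker]
  have hx : x ∈ Submodule.torsionBySet R M ↑(⨅ J ∈ T, p J) := by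
    rw [Submodule.mem_torsionBySet_iff]
    rintro ⟨a, ha⟩
    have := hker ha
    rwa [hq, Ideal.mem_torsionOf_iff] at this
  rw [← Submodule.iSup_torsionBySet_ideal_eq_torsionBySet_iInf
    (fun J hJ K hK hne => (hpair hJ hK hne).sup_eq)] at hx
  rw [Submodule.mem_iSup_finset_iff_exists_sum] at hx
  obtain ⟨μ, hμ⟩ := hx
  rw [← hμ]
  refine Submodule.sum_mem _ fun J hJ => ?_
  -- each piece lies in some `powerTorsion M P` for an associated prime `P`
  set y : M := (μ J : M) with hy
  by_cases hy0 : y = 0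
  · rw [hy0]; exact Submodule.zero_mem _
  obtain ⟨P, hP, hle⟩ := exists_le_isAssociatedPrime_of_isNoetherianRing R y hy0
  have hkill : ∀ a ∈ (J.comap π) ^ n, a • y = 0 := by
    intro a ha
    have := (μ J).2
    rw [Submodule.mem_torsionBySet_iff] at this
    exact this ⟨a, ha⟩
  have hpow : (J.comap π) ^ n ≤ P := by
    refine le_trans ?_ hle
    intro a ha
    rw [Submodule.mem_colon_singleton, Submodule.mem_bot]
    exact hkill a ha
  haveI hPp : P.IsPrime := hP.isPrime
  have hJP : J.comap π ≤ P := Ideal.IsPrime.le_of_pow_le hpow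
  have hPE : J.comap π = P := (hmax J hJ).eq_of_le hPp.ne_top hJP
  have : y ∈ powerTorsion M P := ⟨n, fun a ha => hkill a (hPE ▸ ha)⟩
  exact Submodule.mem_iSup_of_mem (⟨P, hP⟩ : associatedPrimes R M) this

end Aux

/-- An artinian module over a commutative noetherian ring is the internal direct sum of
the submodules `Γ_m(M)`, where `m` ranges over the associated primes of `M`. -/
theorem artinian_module_internal_direct_sum_of_powerTorsion
    {R : Type u} [CommRing R] [IsNoetherianRing R]
    (M : Type v) [AddCommGroup M] [Module R M] [IsArtinian R M] :
    iSupIndep (fun p : associatedPrimes R M => powerTorsion M p.1) ∧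
    (⨆ p : associatedPrimes R M, powerTorsion M p.1) = ⊤ := by
  classical
  constructor
  · rw [iSupIndep_def]
    intro i
    rw [Submodule.disjoint_def]
    intro x hxi hxj
    obtain ⟨n, hn⟩ := hxi
    rw [Submodule.mem_iSup_iff_exists_finsupp] at hxj
    obtain ⟨μ, hμ, hsum⟩ := hxj
    have hsupp : ∀ j ∈ μ.support, j ≠ i ∧ μ j ∈ powerTorsion M j.1 := by
      intro j hj
      by_cases hji : j = i
      · subst hji
        exfalso
        have := hμ j
        rw [iSup_neg (not_not_intro rfl)] at this
        exact Finsupp.mem_support_iff.mp hj (by simpa using this)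
      · refine ⟨hji, ?_⟩
        have := hμ j
        rwa [iSup_pos hji] at this
    have hmax : ∀ j : associatedPrimes R M, (j.1 : Ideal R).IsMaximal := fun j =>
      aux_isMaximal_of_isAssociatedPrime j.2
    have hex : ∀ j ∈ μ.support, ∃ m : ℕ, ∀ a ∈ (j.1 : Ideal R) ^ m, a • μ j = 0 := by
      intro j hj
      exact (hsupp j hj).2
    choose! m hm using hex
    set Jid : Ideal R := ∏ j ∈ μ.support, (j.1 : Ideal R) ^ m j with hJid
    have hkill : ∀ b ∈ Jid, b • x = 0 := by
      intro b hb
      rw [← hsum, Finsupp.sum, Finset.smul_sum]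
      refine Finset.sum_eq_zero fun j hj => ?_
      exact hm j hj b (le_trans Ideal.prod_le_inf (Finset.inf_le hj) hb)
    have hcop : IsCoprime ((i.1 : Ideal R) ^ n) Jid := by
      refine IsCoprime.pow_left ?_
      refine IsCoprime.prod_right fun j hj => IsCoprime.pow_right ?_
      refine Ideal.isCoprime_iff_sup_eq.mpr <| (hmax i).coprime_of_ne (hmax j) ?_
      exact fun e => (hsupp j hj).1 (Subtype.ext e.symm)
    have hsup : (i.1 : Ideal R) ^ n ⊔ Jid = ⊤ := hcop.sup_eq
    have h1 : (1 : R) ∈ (i.1 : Ideal R) ^ n ⊔ Jid := hsup ▸ Submodule.mem_top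
    obtain ⟨a, ha, b, hb, hab⟩ := Submodule.mem_sup.mp h1
    calc x = (1 : R) • x := (one_smul R x).symm
      _ = a • x + b • x := by rw [← hab, add_smul]
      _ = 0 := by rw [hn a ha, hkill b hb, add_zero]
  · rw [eq_top_iff]
    exact fun x _ => aux_mem_iSup_powerTorsion x
end
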